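/- For any Motzkin path mz of width n and area A, let f_i denote the number of H moves of mz made at height i, and p_i the number of U moves of mz ending at height i. Then for every height i ≥ 1, the number of U moves ending at height i equals the number of D moves starting at height i; moreover, if h is the maximum height of mz, then p_1, ..., p_h > 0, and the sequence a^(mz) = (f_0, p_1, f_1, ..., p_h, f_h) satisfies (f_0 + f_1 + ... + f_h) + 2(p_1 + ... + p_h) = n and (0·f_0 + 1·f_1 + ... + h·f_h) + (1·p_1 + 3·p_2 + ... + (2h−1)·p_h) = A; that is, a^(mz) is a building sequence in S(n,A). -/
import Mathlib


/-- Moves of a Motzkin path: Up-right, Horizontal-right, Down-right. -/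
inductive Move : Type
  | U : Move
  | H : Move
  | D : Move
deriving DecidableEq

open Move

/-- The vertical step of a move. -/
def Move.step : Move → ℤ
  | U => 1
  | H => 0
  | D => -1

/-- The height of a path after its first `i` moves. -/
def heightAt (mz : List Move) (i : ℕ) : ℤ :=
  ((mz.take i).map Move.step).sum

/-- A word over {U,H,D} is a Motzkin path if it never goes below the x-axis
and ends on the x-axis. -/
def IsMotzkin (mz : List Move) : Prop :=
  (∀ i, 0 ≤ heightAt mz i) ∧ heightAt mz mz.length = 0

/-- The area between the x-axis and the path (sum of heights at integer points). -/
def area (mz : List Move) : ℤ :=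
  ∑ i ∈ Finset.range (mz.length + 1), heightAt mz i

/-- `MZ n A` is the set of Motzkin paths of width `n` and area `A`. -/
def MZ (n A : ℕ) : Set (List Move) :=
  {mz | mz.length = n ∧ IsMotzkin mz ∧ area mz = A}

/-- The weight `ω_i` of the `i`-th move (0-indexed): it is `h_i` for U and D moves
(height after the move for U, before the move for D) and `2h_i + 1` for H moves. -/
def moveWeight (mz : List Move) (i : ℕ) : ℤ :=
  match mz[i]? with
  | some U => heightAt mz (i + 1)
  | some D => heightAt mz i
  | some H => 2 * heightAt mz i + 1
  | none => 1

/-- The weight `ω(mz)` of a Motzkin path. -/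
def weight (mz : List Move) : ℤ :=
  ∏ i ∈ Finset.range mz.length, moveWeight mz i

/-- The total displacement `D(π) = Σ_i |i - π(i)|` of a permutation. -/
def totalDisp {n : ℕ} (π : Equiv.Perm (Fin n)) : ℤ :=
  ∑ i : Fin n, |((π i : ℕ) : ℤ) - ((i : ℕ) : ℤ)|

/-- The word over {U,H,D} associated to a permutation. -/
def toPath {n : ℕ} (π : Equiv.Perm (Fin n)) : List Move :=
  (List.finRange n).map fun i : Fin n =>
    if (i : ℕ) < (π i : ℕ) ∧ (i : ℕ) < (π.symm i : ℕ) then U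
    else if (π i : ℕ) < (i : ℕ) ∧ (π.symm i : ℕ) < (i : ℕ) then D
    else H

/-- The last fall length: the length of the maximal suffix consisting of D moves. -/
def lastFall (mz : List Move) : ℕ :=
  (mz.reverse.takeWhile (fun m => decide (m = D))).length

/-- The maximum height of a path. -/
def maxHeight (mz : List Move) : ℕ :=
  (Finset.range (mz.length + 1)).sup fun i => (heightAt mz i).toNat

/-- `flatsAt mz k` is the number of H moves of `mz` made at height `k`. -/
def flatsAt (mz : List Move) (k : ℕ) : ℕ :=
  ((Finset.range mz.length).filter fun j => mz[j]? = some H ∧ heightAt mz j = (k : ℤ)).card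

/-- `peaksAt mz k` is the number of U moves of `mz` ending at height `k`. -/
def peaksAt (mz : List Move) (k : ℕ) : ℕ :=
  ((Finset.range mz.length).filter fun j => mz[j]? = some U ∧ heightAt mz (j + 1) = (k : ℤ)).card

/-- `downsAt mz k` is the number of D moves of `mz` starting at height `k`. -/
def downsAt (mz : List Move) (k : ℕ) : ℕ :=
  ((Finset.range mz.length).filter fun j => mz[j]? = some D ∧ heightAt mz j = (k : ℤ)).card

/-- A candidate building sequence `(f_0, p_1, f_1, …, p_h, f_h)`, recorded as its
height `h` together with the flat counts `f` and peak counts `p`. -/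
structure BSeq where
  h : ℕ
  f : ℕ → ℕ
  p : ℕ → ℕ

/-- `Sset n A` is the set of building sequences for width `n` and area `A`:
all `p`-entries `p_1, …, p_h` are positive, entries beyond the height are zero, and the
width and area conditions hold. -/
def Sset (n A : ℕ) : Set BSeq :=
  {a | (∀ i, 1 ≤ i → i ≤ a.h → 0 < a.p i) ∧
       a.p 0 = 0 ∧
       (∀ i, a.h < i → a.p i = 0) ∧
       (∀ i, a.h < i → a.f i = 0) ∧
       (∑ i ∈ Finset.range (a.h + 1), a.f i) + 2 * (∑ i ∈ Finset.Icc 1 a.h, a.p i) = n ∧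
       (∑ i ∈ Finset.range (a.h + 1), i * a.f i) +
         (∑ i ∈ Finset.Icc 1 a.h, (2 * i - 1) * a.p i) = A}

/-- `mz` has building sequence `a`. -/
def hasBuildSeq (mz : List Move) (a : BSeq) : Prop :=
  maxHeight mz = a.h ∧ (∀ i, flatsAt mz i = a.f i) ∧ (∀ i, peaksAt mz i = a.p i)

/-- `perm(a) = ∏_{i=0}^h (2i+1)^{f_i} · ∏_{i=1}^h i^{2p_i}`. -/
def permWeight (a : BSeq) : ℕ :=
  (∏ i ∈ Finset.range (a.h + 1), (2 * i + 1) ^ a.f i) *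
    ∏ i ∈ Finset.Icc 1 a.h, i ^ (2 * a.p i)

/-- `m(a)`, the number of Motzkin paths with building sequence `a`. -/
def mcount (a : BSeq) : ℕ :=
  Nat.choose (a.f a.h + a.p a.h - 1) (a.p a.h - 1) *
    (∏ i ∈ Finset.Icc 1 (a.h - 1),
      Nat.choose (a.p (i + 1) + a.f i) (a.f i) *
        Nat.choose (a.p (i + 1) + a.f i + a.p i - 1) (a.p i - 1)) *
    Nat.choose (a.p 1 + a.f 0) (a.f 0)

/-- `M(n,A,l)`: the number of Motzkin paths of width `n`, area `A` and last fall length `l`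
(for negative arguments there are no such paths, so the value is `0`; the value at
`(0,0,0)` is `1`, counting the empty path). -/
noncomputable def Mcount (n A l : ℤ) : ℕ :=
  Nat.card {mz : List Move // (mz.length : ℤ) = n ∧ IsMotzkin mz ∧ area mz = A ∧
    (lastFall mz : ℤ) = l}

/-- `D(n,d,l)`: the sum of the weights of all Motzkin paths of width `n`, area `d` and
last fall length `l`. -/
noncomputable def Dw (n d l : ℤ) : ℤ :=
  ∑ᶠ mz ∈ {mz : List Move | (mz.length : ℤ) = n ∧ IsMotzkin mz ∧ area mz = d ∧
    (lastFall mz : ℤ) = l}, weight mz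

/-- `M(n,A,h,p)`: the number of Motzkin paths of width `n`, area `A`, maximum height `h`,
with exactly `p` U-moves ending at height `h` and no H-moves at height `h`. -/
noncomputable def Mtop (n A h p : ℤ) : ℕ :=
  Nat.card {mz : List Move // (mz.length : ℤ) = n ∧ IsMotzkin mz ∧ area mz = A ∧
    (maxHeight mz : ℤ) = h ∧ (peaksAt mz h.toNat : ℤ) = p ∧ flatsAt mz h.toNat = 0}

/-- `D(n,d,h,p)`: the sum of weights of Motzkin paths of width `n`, area `d`,
maximum height `h`, with exactly `p` U-moves ending at height `h` and no H-moves at height `h`. -/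
noncomputable def Dtop (n d h p : ℤ) : ℤ :=
  ∑ᶠ mz ∈ {mz : List Move | (mz.length : ℤ) = n ∧ IsMotzkin mz ∧ area mz = d ∧
    (maxHeight mz : ℤ) = h ∧ (peaksAt mz h.toNat : ℤ) = p ∧ flatsAt mz h.toNat = 0}, weight mz

/-- The area under the first `i` moves of a path (trapezoid rule; may be a half-integer). -/
def prefixArea (mz : List Move) (i : ℕ) : ℚ :=
  ∑ j ∈ Finset.range i, ((heightAt mz j : ℚ) + (heightAt mz (j + 1) : ℚ)) / 2

open Move Finset in
lemma heightAt_succ (mz : List Move) {j : ℕ} {m : Move} (hm : mz[j]? = some m) :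
    heightAt mz (j + 1) = heightAt mz j + m.step := by
  simp [heightAt, List.take_succ, hm]

lemma heightAt_zero (mz : List Move) : heightAt mz 0 = 0 := rfl

open Move Finset in
lemma heightAt_le_max (mz : List Move) {i : ℕ} (hi : i ≤ mz.length) :
    heightAt mz i ≤ (maxHeight mz : ℤ) := by
  refine le_trans (Int.self_le_toNat _) ?_
  exact_mod_cast Nat.cast_le.mpr (Finset.le_sup (f := fun i => (heightAt mz i).toNat)
    (Finset.mem_range.mpr (Nat.lt_succ_of_le hi)))

open Move Finset in
lemma exists_max (mz : List Move) (hM : IsMotzkin mz) :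
    ∃ m ≤ mz.length, heightAt mz m = (maxHeight mz : ℤ) := by
  obtain ⟨m, hm, he⟩ := Finset.exists_mem_eq_sup (Finset.range (mz.length + 1))
    (Finset.nonempty_range_iff.mpr (Nat.succ_ne_zero _)) (fun i => (heightAt mz i).toNat)
  rw [Finset.mem_range] at hm
  have := hM.1 m
  refine ⟨m, by omega, ?_⟩
  rw [maxHeight, he]
  omega
open Move Finset in
lemma crossing_term (mz : List Move) (hM : IsMotzkin mz) (i : ℕ) (hi : 1 ≤ i) :
    ∀ j ∈ Finset.range mz.length,
      ((if mz[j]? = some U ∧ heightAt mz (j+1) = (i:ℤ) then (1:ℤ) else 0)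
      - (if mz[j]? = some D ∧ heightAt mz j = (i:ℤ) then 1 else 0))
      = ((if (i:ℤ) ≤ heightAt mz (j+1) then 1 else 0)
        - (if (i:ℤ) ≤ heightAt mz j then 1 else 0)) := by
  intro j hj
  rw [Finset.mem_range] at hj
  have hm : mz[j]? = some mz[j] := List.getElem?_eq_getElem hj
  have hs := heightAt_succ mz hm
  have hnn := hM.1 j
  cases hmv : mz[j] <;> rw [hmv] at hs hm <;> rw [hm] <;>
    simp only [Option.some.injEq, Move.step] at hs ⊢
  · have e2 : ¬ (U = D ∧ heightAt mz j = (i:ℤ)) := by simp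
    rw [if_neg e2]
    simp only [true_and]
    split_ifs <;> omega
  · have e2 : ¬ (H = D ∧ heightAt mz j = (i:ℤ)) := by simp
    have e1 : ¬ (H = U ∧ heightAt mz (j+1) = (i:ℤ)) := by simp
    rw [if_neg e2, if_neg e1]
    split_ifs <;> omega
  · have e1 : ¬ (D = U ∧ heightAt mz (j+1) = (i:ℤ)) := by simp
    rw [if_neg e1]
    simp only [true_and]
    split_ifs <;> omega

open Move Finset in
lemma peaks_eq_downs (mz : List Move) (hM : IsMotzkin mz) (i : ℕ) (hi : 1 ≤ i) :
    peaksAt mz i = downsAt mz i := by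
  have key : ∑ j ∈ Finset.range mz.length,
      ((if (i:ℤ) ≤ heightAt mz (j+1) then (1:ℤ) else 0)
        - (if (i:ℤ) ≤ heightAt mz j then 1 else 0)) = 0 := by
    rw [Finset.sum_range_sub (fun j => if (i:ℤ) ≤ heightAt mz j then (1:ℤ) else 0)]
    rw [hM.2, heightAt_zero]
    have : ¬ ((i:ℤ) ≤ 0) := by omega
    simp [this]
  have h3 : (peaksAt mz i : ℤ) = (downsAt mz i : ℤ) := by
    have := Finset.sum_congr rfl (crossing_term mz hM i hi)
    rw [key, Finset.sum_sub_distrib, sub_eq_zero] at this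
    rw [peaksAt, downsAt]
    push_cast [Finset.card_filter]
    simpa using this
  exact_mod_cast h3

open Move Finset in
lemma exists_up (mz : List Move) (hM : IsMotzkin mz) (m : ℕ) :
    ∀ i : ℕ, 1 ≤ i → (i:ℤ) ≤ heightAt mz m → m ≤ mz.length →
      ∃ j < m, mz[j]? = some U ∧ heightAt mz (j+1) = (i:ℤ) := by
  induction m with
  | zero => intro i hi h0 _; rw [heightAt_zero] at h0; omega
  | succ m ih =>
    intro i hi hh hlen
    by_cases hc : (i:ℤ) ≤ heightAt mz m
    · obtain ⟨j, hj, h⟩ := ih i hi hc (by omega)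
      exact ⟨j, by omega, h⟩
    · have hm : mz[m]? = some mz[m] := List.getElem?_eq_getElem (by omega)
      have hs := heightAt_succ mz hm
      have hU : mz[m] = U := by
        cases hmv : mz[m] <;> rw [hmv] at hs <;> simp [Move.step] at hs <;> omega
      rw [hU] at hm hs
      simp [Move.step] at hs
      exact ⟨m, Nat.lt_succ_self m, hm, by omega⟩
open Move Finset in
lemma card_fiber (s t : Finset ℕ) (v : ℕ → ℕ) (c : ℕ → ℕ)
    (hmap : ∀ j ∈ s, v j ∈ t)
    (hc : ∀ i ∈ t, (s.filter (fun j => v j = i)).card = c i) :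
    s.card = ∑ i ∈ t, c i := by
  rw [Finset.card_eq_sum_card_fiberwise hmap]
  exact Finset.sum_congr rfl hc

open Move Finset in
lemma sum_fiber (s t : Finset ℕ) (v : ℕ → ℕ) (g : ℕ → ℤ) (c : ℕ → ℕ)
    (hmap : ∀ j ∈ s, v j ∈ t)
    (hc : ∀ i ∈ t, (s.filter (fun j => v j = i)).card = c i)
    (hg : ∀ j ∈ s, g j = (v j : ℤ)) :
    ∑ j ∈ s, g j = ∑ i ∈ t, (i : ℤ) * c i := by
  rw [← Finset.sum_fiberwise_of_maps_to hmap g]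
  refine Finset.sum_congr rfl fun i hi => ?_
  have : ∑ j ∈ s.filter (fun j => v j = i), g j
      = ∑ _j ∈ s.filter (fun j => v j = i), (i : ℤ) := by
    refine Finset.sum_congr rfl fun j hj => ?_
    rw [Finset.mem_filter] at hj
    rw [hg j hj.1, hj.2]
  rw [this, Finset.sum_const, hc i hi, nsmul_eq_mul, mul_comm]

/-- for any Motzkin path `mz` of width `n` and area `A`: the number of U moves
ending at each height `i ≥ 1` equals the number of D moves starting at height `i`;
`p_1, …, p_h > 0` where `h` is the maximum height; the width and area conditions hold;
that is, `a^(mz)` is a building sequence in `S(n,A)`. -/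
theorem building_sequence_of_motzkin_path (n A : ℕ) (mz : List Move) (hmz : mz ∈ MZ n A) :
    (∀ i, 1 ≤ i → peaksAt mz i = downsAt mz i) ∧
    (∀ i, 1 ≤ i → i ≤ maxHeight mz → 0 < peaksAt mz i) ∧
    (∑ i ∈ Finset.range (maxHeight mz + 1), flatsAt mz i) +
      2 * (∑ i ∈ Finset.Icc 1 (maxHeight mz), peaksAt mz i) = n ∧
    (∑ i ∈ Finset.range (maxHeight mz + 1), i * flatsAt mz i) +
      (∑ i ∈ Finset.Icc 1 (maxHeight mz), (2 * i - 1) * peaksAt mz i) = A ∧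
    BSeq.mk (maxHeight mz) (flatsAt mz) (peaksAt mz) ∈ Sset n A := by
  obtain ⟨hlen, hM, hA⟩ := hmz
  set L := mz.length with hL
  set h := maxHeight mz with hh
  -- positivity
  have hpos : ∀ i, 1 ≤ i → i ≤ h → 0 < peaksAt mz i := by
    intro i hi1 hih
    obtain ⟨m, hmL, hmax⟩ := exists_max mz hM
    have him : (i : ℤ) ≤ heightAt mz m := by rw [hmax]; exact_mod_cast hih
    obtain ⟨j, hjm, hjU, hjh⟩ := exists_up mz hM m i hi1 him hmL
    refine Finset.card_pos.mpr ⟨j, Finset.mem_filter.mpr ⟨Finset.mem_range.mpr (by omega), hjU, hjh⟩⟩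
  -- zero lemmas
  have hp0 : peaksAt mz 0 = 0 := by
    rw [peaksAt, Finset.card_eq_zero, Finset.filter_eq_empty_iff]
    rintro j hj ⟨hU, hhj⟩
    have hs := heightAt_succ mz hU
    have := hM.1 j
    simp only [Move.step] at hs
    omega
  have hpgt : ∀ i, h < i → peaksAt mz i = 0 := by
    intro i hi
    rw [peaksAt, Finset.card_eq_zero, Finset.filter_eq_empty_iff]
    rintro j hj ⟨hU, hhj⟩
    rw [Finset.mem_range] at hj
    have := heightAt_le_max mz (i := j + 1) (by omega)
    omega
  have hfgt : ∀ i, h < i → flatsAt mz i = 0 := by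
    intro i hi
    rw [flatsAt, Finset.card_eq_zero, Finset.filter_eq_empty_iff]
    rintro j hj ⟨hU, hhj⟩
    rw [Finset.mem_range] at hj
    have := heightAt_le_max mz (i := j) (by omega)
    omega
  -- the three filters
  set sU := (Finset.range L).filter (fun j => mz[j]? = some U) with hsU
  set sH := (Finset.range L).filter (fun j => mz[j]? = some H) with hsH
  set sD := (Finset.range L).filter (fun j => mz[j]? = some D) with hsD
  -- splitting sums over range L
  have hsplit : ∀ g : ℕ → ℤ, ∑ j ∈ Finset.range L, g j
      = (∑ j ∈ sU, g j) + (∑ j ∈ sH, g j) + (∑ j ∈ sD, g j) := by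
    intro g
    rw [hsU, hsH, hsD, Finset.sum_filter, Finset.sum_filter, Finset.sum_filter,
      ← Finset.sum_add_distrib, ← Finset.sum_add_distrib]
    refine Finset.sum_congr rfl fun j hj => ?_
    rw [Finset.mem_range] at hj
    have hm : mz[j]? = some mz[j] := List.getElem?_eq_getElem hj
    cases hmv : mz[j] <;> rw [hmv] at hm <;> simp [hm]
  -- fiber data for U
  have hmapU : ∀ j ∈ sU, (heightAt mz (j+1)).toNat ∈ Finset.Icc 1 h := by
    intro j hj
    rw [hsU, Finset.mem_filter, Finset.mem_range] at hj
    have hs := heightAt_succ mz hj.2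
    simp only [Move.step] at hs
    have h1 := hM.1 j
    have h2 := heightAt_le_max mz (i := j + 1) (by omega)
    rw [Finset.mem_Icc]
    omega
  have hcU : ∀ i ∈ Finset.Icc 1 h, (sU.filter (fun j => (heightAt mz (j+1)).toNat = i)).card
      = peaksAt mz i := by
    intro i _
    rw [hsU, Finset.filter_filter, peaksAt]
    congr 1
    refine Finset.filter_congr fun j hj => ?_
    have := hM.1 (j + 1)
    exact and_congr_right fun _ => by omega
  -- fiber data for H (start height)
  have hmapH : ∀ j ∈ sH, (heightAt mz j).toNat ∈ Finset.range (h + 1) := by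
    intro j hj
    rw [hsH, Finset.mem_filter, Finset.mem_range] at hj
    have h1 := hM.1 j
    have h2 := heightAt_le_max mz (i := j) (by omega)
    rw [Finset.mem_range]
    omega
  have hcH : ∀ i ∈ Finset.range (h + 1), (sH.filter (fun j => (heightAt mz j).toNat = i)).card
      = flatsAt mz i := by
    intro i _
    rw [hsH, Finset.filter_filter, flatsAt]
    congr 1
    refine Finset.filter_congr fun j hj => ?_
    have := hM.1 j
    exact and_congr_right fun _ => by omega
  -- fiber data for D (start height)
  have hmapD : ∀ j ∈ sD, (heightAt mz j).toNat ∈ Finset.Icc 1 h := by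
    intro j hj
    rw [hsD, Finset.mem_filter, Finset.mem_range] at hj
    have hs := heightAt_succ mz hj.2
    simp only [Move.step] at hs
    have h1 := hM.1 (j + 1)
    have h2 := heightAt_le_max mz (i := j) (by omega)
    rw [Finset.mem_Icc]
    omega
  have hcD : ∀ i ∈ Finset.Icc 1 h, (sD.filter (fun j => (heightAt mz j).toNat = i)).card
      = downsAt mz i := by
    intro i _
    rw [hsD, Finset.filter_filter, downsAt]
    congr 1
    refine Finset.filter_congr fun j hj => ?_
    have := hM.1 j
    exact and_congr_right fun _ => by omega
  -- counts
  have hcardU : sU.card = ∑ i ∈ Finset.Icc 1 h, peaksAt mz i := card_fiber _ _ _ _ hmapU hcU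
  have hcardH : sH.card = ∑ i ∈ Finset.range (h + 1), flatsAt mz i := card_fiber _ _ _ _ hmapH hcH
  have hcardD : sD.card = ∑ i ∈ Finset.Icc 1 h, downsAt mz i := card_fiber _ _ _ _ hmapD hcD
  have hpd : ∀ i, 1 ≤ i → peaksAt mz i = downsAt mz i := fun i hi => peaks_eq_downs mz hM i hi
  have hDU : sD.card = sU.card := by
    rw [hcardU, hcardD]
    refine Finset.sum_congr rfl fun i hi => ?_
    rw [Finset.mem_Icc] at hi
    exact (hpd i hi.1).symm
  -- width
  have hwidth : (∑ i ∈ Finset.range (h + 1), flatsAt mz i)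
      + 2 * (∑ i ∈ Finset.Icc 1 h, peaksAt mz i) = n := by
    have hcards : (L : ℤ) = sU.card + sH.card + sD.card := by
      have := hsplit (fun _ => (1 : ℤ))
      simpa using this
    have : (L : ℕ) = sU.card + sH.card + sD.card := by exact_mod_cast hcards
    rw [← hcardU, ← hcardH]
    omega
  -- area
  have harea : (∑ i ∈ Finset.range (h + 1), (i : ℤ) * flatsAt mz i)
      + (∑ i ∈ Finset.Icc 1 h, (2 * (i : ℤ) - 1) * peaksAt mz i) = A := by
    have h0 : area mz = (∑ j ∈ Finset.range L, heightAt mz (j + 1)) + heightAt mz 0 := by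
      rw [area, Finset.sum_range_succ']
    have hU1 : ∑ j ∈ sU, heightAt mz (j + 1) = ∑ i ∈ Finset.Icc 1 h, (i : ℤ) * peaksAt mz i := by
      refine sum_fiber _ _ _ _ _ hmapU hcU fun j hj => ?_
      have := hM.1 (j + 1)
      omega
    have hH1 : ∑ j ∈ sH, heightAt mz (j + 1) = ∑ i ∈ Finset.range (h + 1), (i : ℤ) * flatsAt mz i := by
      refine sum_fiber _ _ _ _ _ hmapH hcH fun j hj => ?_
      rw [hsH, Finset.mem_filter] at hj
      have hs := heightAt_succ mz hj.2
      simp only [Move.step] at hs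
      have := hM.1 j
      omega
    have hD1 : ∑ j ∈ sD, heightAt mz j = ∑ i ∈ Finset.Icc 1 h, (i : ℤ) * downsAt mz i := by
      refine sum_fiber _ _ _ _ _ hmapD hcD fun j hj => ?_
      have := hM.1 j
      omega
    have hD2 : ∑ j ∈ sD, heightAt mz (j + 1) = (∑ j ∈ sD, heightAt mz j) - sD.card := by
      have : ∑ j ∈ sD, heightAt mz (j + 1) = ∑ j ∈ sD, (heightAt mz j - 1) := by
        refine Finset.sum_congr rfl fun j hj => ?_
        rw [hsD, Finset.mem_filter] at hj
        have hs := heightAt_succ mz hj.2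
        simp only [Move.step] at hs
        omega
      rw [this, Finset.sum_sub_distrib]
      simp
    have hDcast : (sD.card : ℤ) = ∑ i ∈ Finset.Icc 1 h, (downsAt mz i : ℤ) := by
      rw [hcardD]; push_cast; rfl
    have key : (A : ℤ) = (∑ i ∈ Finset.Icc 1 h, (i:ℤ) * peaksAt mz i)
        + (∑ i ∈ Finset.range (h+1), (i:ℤ) * flatsAt mz i)
        + ((∑ i ∈ Finset.Icc 1 h, (i:ℤ) * downsAt mz i) - ∑ i ∈ Finset.Icc 1 h, (downsAt mz i : ℤ)) := by
      rw [← hA, h0, hsplit (fun j => heightAt mz (j+1)), hU1, hH1, hD2, hD1, heightAt_zero, hDcast]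
      ring
    have hdp : ∀ i ∈ Finset.Icc 1 h, ((i:ℤ) * downsAt mz i - downsAt mz i)
        = ((2 * (i:ℤ) - 1) * peaksAt mz i - (i:ℤ) * peaksAt mz i) := by
      intro i hi
      rw [Finset.mem_Icc] at hi
      rw [← hpd i hi.1]
      ring
    rw [← Finset.sum_sub_distrib, Finset.sum_congr rfl hdp, Finset.sum_sub_distrib] at key
    linarith [key]
  -- cast area identity to ℕ
  have hc1 : ((∑ i ∈ Finset.range (h+1), i * flatsAt mz i : ℕ) : ℤ)
      = ∑ i ∈ Finset.range (h+1), (i:ℤ) * flatsAt mz i := by push_cast; rfl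
  have hc2 : ((∑ i ∈ Finset.Icc 1 h, (2 * i - 1) * peaksAt mz i : ℕ) : ℤ)
      = ∑ i ∈ Finset.Icc 1 h, (2 * (i:ℤ) - 1) * peaksAt mz i := by
    push_cast
    refine Finset.sum_congr rfl fun i hi => ?_
    rw [Finset.mem_Icc] at hi
    rw [Nat.cast_sub (by omega)]
    push_cast
    ring
  have hgoal4 : (∑ i ∈ Finset.range (h+1), i * flatsAt mz i)
      + (∑ i ∈ Finset.Icc 1 h, (2 * i - 1) * peaksAt mz i) = A := by
    have : (((∑ i ∈ Finset.range (h+1), i * flatsAt mz i)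
        + (∑ i ∈ Finset.Icc 1 h, (2 * i - 1) * peaksAt mz i) : ℕ) : ℤ) = (A : ℤ) := by
      rw [Nat.cast_add, hc1, hc2]
      exact harea
    exact_mod_cast this
  exact ⟨hpd, hpos, hwidth, hgoal4,
    ⟨fun i hi1 hi2 => hpos i hi1 hi2, hp0, hpgt, hfgt, hwidth, hgoal4⟩⟩
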